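/- Let θ ∈ (0,1) and T ≥ 2 an integer. Then ∑_{k=1}^∞ (T/(T+1))^k · 1/(k − θ) ≤ 1/(1−θ) + log(1/(1−θ)) + 2 log 4 + log T. -/

import Mathlib

theorem power_series_tail_bound (θ : ℝ) (hθ0 : 0 < θ) (hθ1 : θ < 1)
    (T : ℕ) (hT : 2 ≤ T) :
    ∑' k : ℕ, ((T : ℝ) / (T + 1)) ^ (k + 1) * (1 / ((k : ℝ) + 1 - θ))
      ≤ 1 / (1 - θ) + Real.log (1 / (1 - θ)) + 2 * Real.log 4 + Real.log T := by
  have hT1 : (1:ℝ) ≤ (T:ℝ) := by exact_mod_cast Nat.one_le_of_lt hT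
  set r : ℝ := (T : ℝ) / ((T:ℝ) + 1) with hrdef
  have hr0 : 0 ≤ r := by positivity
  have hr1 : r < 1 := by
    rw [hrdef, div_lt_one (by linarith)]; linarith
  have h1θ : 0 < 1 - θ := by linarith
  have hden : ∀ k : ℕ, 0 < (k : ℝ) + 1 - θ := fun k => by
    have : (0:ℝ) ≤ (k:ℝ) := Nat.cast_nonneg k; linarith
  set a : ℕ → ℝ := fun k => r ^ (k+1) * (1 / ((k:ℝ) + 1 - θ)) with hadef
  have ha_nonneg : ∀ k, 0 ≤ a k := fun k => by
    have := hden k; positivity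
  have hsum : Summable a := by
    have hgeo : Summable (fun k : ℕ => r * (r ^ k * (1/(1-θ)))) :=
      ((summable_geometric_of_lt_one hr0 hr1).mul_right (1/(1-θ))).mul_left r
    apply Summable.of_nonneg_of_le ha_nonneg (fun k => ?_) hgeo
    have h1 : (1:ℝ) / ((k:ℝ) + 1 - θ) ≤ 1 / (1 - θ) := by
      apply one_div_le_one_div_of_le h1θ
      have : (0:ℝ) ≤ (k:ℝ) := Nat.cast_nonneg k; linarith
    calc a k = r ^ (k+1) * (1 / ((k:ℝ) + 1 - θ)) := rfl
      _ ≤ r ^ (k+1) * (1/(1-θ)) := by gcongr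
      _ = r * (r ^ k * (1/(1-θ))) := by ring
  -- log series
  have hlog : HasSum (fun n : ℕ => r ^ (n + 1) / (n + 1)) (-Real.log (1 - r)) :=
    Real.hasSum_pow_div_log_of_abs_lt_one (by rw [abs_of_nonneg hr0]; exact hr1)
  have h1r : 1 - r = 1 / ((T:ℝ) + 1) := by
    rw [hrdef]; field_simp; ring
  have hlogval : -Real.log (1 - r) = Real.log ((T:ℝ) + 1) := by
    rw [h1r, Real.log_div one_ne_zero (by linarith), Real.log_one]
    ring
  -- split off first term
  rw [Summable.tsum_eq_zero_add hsum]
  have ha0 : a 0 ≤ 1 / (1 - θ) := by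
    have : a 0 = r * (1 / (1 - θ)) := by
      simp [hadef]
    rw [this]
    nlinarith [one_div_pos.mpr h1θ]
  have htail : ∑' k : ℕ, a (k + 1) ≤ Real.log ((T:ℝ) + 1) := by
    rw [← hlogval, ← hlog.tsum_eq]
    apply Summable.tsum_le_tsum _ (hsum.comp_injective (add_left_injective 1)) hlog.summable
    intro k
    have hk1 : (0:ℝ) < (k:ℝ) + 1 := by positivity
    have h2 : a (k+1) = r ^ (k+2) * (1 / ((k:ℝ) + 2 - θ)) := by
      simp only [hadef]
      push_cast
      ring_nf
    have hb1 : r ^ (k+2) ≤ r ^ (k+1) := pow_le_pow_of_le_one hr0 hr1.le (by omega)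
    have hb2 : (1:ℝ) / ((k:ℝ)+2-θ) ≤ 1/((k:ℝ)+1) :=
      one_div_le_one_div_of_le hk1 (by linarith)
    calc a (k+1) = r ^ (k+2) * (1 / ((k:ℝ) + 2 - θ)) := h2
      _ ≤ r ^ (k+1) * (1/((k:ℝ)+1)) :=
          mul_le_mul hb1 hb2 (one_div_nonneg.mpr (by linarith [hden k])) (by positivity)
      _ = r ^ (k+1) / ((k:ℝ)+1) := by ring
  have hlog4 : Real.log ((T:ℝ) + 1) ≤ Real.log 4 + Real.log (T:ℝ) := by
    rw [← Real.log_mul (by norm_num) (by linarith)]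
    apply Real.log_le_log (by linarith)
    linarith
  have hlog4pos : 0 ≤ Real.log 4 := Real.log_nonneg (by norm_num)
  have hlogθ : 0 ≤ Real.log (1 / (1 - θ)) := by
    apply Real.log_nonneg
    rw [le_div_iff₀ h1θ]; linarith
  linarith
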